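/- For every σ ∈ S_n and every integer 0 ≤ r ≤ n, the ball of radius r around σ satisfies |{γ ∈ S_n : d_U(σ, γ) ≤ r}| ≤ r! · C(n, r)², where C(a,b) denotes the binomial coefficient. -/

import Mathlib

/-- The string (as a list) obtained from the one-line notation of `σ`
by deleting all symbols in `A`. -/
def ulamDel {n : ℕ} (σ : Equiv.Perm (Fin n)) (A : Finset (Fin n)) : List (Fin n) :=
  (List.ofFn fun i => σ i).filter (fun x => decide (x ∉ A))

/-- The Ulam distance between two permutations: the least number of distinct
symbols that must be deleted from each until they are equal. -/
noncomputable def ulamDist {n : ℕ} (α β : Equiv.Perm (Fin n)) : ℕ :=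
  sInf {m | ∃ A : Finset (Fin n), A.card = m ∧ ulamDel α A = ulamDel β A}

/-- Key list lemma: if two lists have the same `p`-mask, equal `p`-filters, and agree
pointwise at positions where `p` is false, they are equal. -/
theorem list_eq_of_mask {α : Type*} (p : α → Bool) :
    ∀ (l₁ l₂ : List α), l₁.map p = l₂.map p → l₁.filter p = l₂.filter p →
      (∀ i (h₁ : i < l₁.length) (h₂ : i < l₂.length),
        p (l₁.get ⟨i, h₁⟩) = false → l₁.get ⟨i, h₁⟩ = l₂.get ⟨i, h₂⟩) → l₁ = l₂
  | [], l₂, hm, _, _ => by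
      have : l₂.map p = [] := hm.symm
      simpa using (List.map_eq_nil_iff.mp this).symm
  | a :: t₁, [], hm, _, _ => by simp at hm
  | a :: t₁, b :: t₂, hm, hf, hp => by
      simp only [List.map_cons, List.cons.injEq] at hm
      obtain ⟨hpab, hmt⟩ := hm
      have hab : a = b := by
        cases hpa : p a with
        | true =>
          have hpb : p b = true := by rw [← hpab, hpa]
          simp only [List.filter_cons, hpa, hpb, if_true] at hf
          exact (List.cons.injEq _ _ _ _ ▸ hf).1
        | false =>
          exact hp 0 (by simp) (by simp) hpa
      subst hab
      have ht : t₁ = t₂ := by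
        refine list_eq_of_mask p t₁ t₂ hmt ?_ ?_
        · cases hpa : p a with
          | true =>
            have hpb : p a = true := hpa
            simp only [List.filter_cons, hpa, if_true] at hf
            exact (List.cons.injEq _ _ _ _ ▸ hf).2
          | false => simpa [List.filter_cons, hpa] using hf
        · intro i h₁ h₂ hfalse
          exact hp (i + 1) (by simpa using Nat.succ_lt_succ h₁)
            (by simpa using Nat.succ_lt_succ h₂) hfalse
      rw [ht]

theorem ulamDel_subset {n : ℕ} (γ : Equiv.Perm (Fin n)) {A B : Finset (Fin n)}
    (h : A ⊆ B) : ulamDel γ B = (ulamDel γ A).filter (fun x => decide (x ∉ B)) := by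
  unfold ulamDel
  rw [List.filter_filter]
  congr 1
  funext x
  by_cases hx : x ∈ B
  · simp [hx]
  · have hxA : x ∉ A := fun hA => hx (h hA)
    simp [hx, hxA]

theorem exists_card_eq_del {n : ℕ} {σ γ : Equiv.Perm (Fin n)} {r : ℕ}
    (hd : ulamDist σ γ ≤ r) (hr : r ≤ n) :
    ∃ A : Finset (Fin n), A.card = r ∧ ulamDel σ A = ulamDel γ A := by
  have hne : {m | ∃ A : Finset (Fin n), A.card = m ∧ ulamDel σ A = ulamDel γ A}.Nonempty := by
    refine ⟨n, Finset.univ, by simp, ?_⟩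
    unfold ulamDel
    simp
  have hmem := Nat.sInf_mem hne
  obtain ⟨A, hAcard, hAdel⟩ := hmem
  have hAr : A.card ≤ r := by rw [hAcard]; exact hd
  obtain ⟨B, hAB, _, hBcard⟩ := Finset.exists_subsuperset_card_eq (Finset.subset_univ A)
    hAr (by simpa using hr)
  refine ⟨B, hBcard, ?_⟩
  rw [ulamDel_subset σ hAB, ulamDel_subset γ hAB, hAdel]

/-- Encoding of the positions of the symbols of `A` in the one-line notation of `γ`. -/
noncomputable def ulamEnc {n r : ℕ} (γ : Equiv.Perm (Fin n)) (A : Finset (Fin n))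
    (h : A.card = r) : Fin r ↪ Fin n :=
  ⟨fun j => γ.symm (A.orderEmbOfFin h j),
    fun j₁ j₂ hj => (A.orderEmbOfFin h).injective (γ.symm.injective hj)⟩

theorem ulamEnc_congr {n r : ℕ} (γ : Equiv.Perm (Fin n)) {A B : Finset (Fin n)}
    (hAB : A = B) (hA : A.card = r) (hB : B.card = r) :
    ulamEnc γ A hA = ulamEnc γ B hB := by subst hAB; rfl

/-- For every `σ ∈ S_n` and `0 ≤ r ≤ n`, the ball of radius `r` around
`σ` has size at most `r! · C(n, r)²`. -/
theorem ulam_ball_size_le {n : ℕ} (σ : Equiv.Perm (Fin n)) (r : ℕ) (hr : r ≤ n) :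
    {γ : Equiv.Perm (Fin n) | ulamDist σ γ ≤ r}.ncard ≤ r.factorial * (n.choose r) ^ 2 := by
  classical
  set S := {γ : Equiv.Perm (Fin n) | ulamDist σ γ ≤ r} with hS
  set T : Finset (Finset (Fin n) × (Fin r ↪ Fin n)) :=
    (Finset.univ.powersetCard r) ×ˢ (Finset.univ : Finset (Fin r ↪ Fin n)) with hT
  have key : ∀ γ ∈ S, ∃ A : Finset (Fin n), A.card = r ∧ ulamDel σ A = ulamDel γ A :=
    fun γ hγ => exists_card_eq_del hγ hr
  let f : Equiv.Perm (Fin n) → Finset (Fin n) × (Fin r ↪ Fin n) := fun γ =>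
    if h : γ ∈ S then
      ⟨(key γ h).choose, ulamEnc γ (key γ h).choose (key γ h).choose_spec.1⟩
    else ⟨∅, (Fin.castLEEmb hr)⟩
  have hmaps : ∀ γ ∈ S, f γ ∈ (T : Set (Finset (Fin n) × (Fin r ↪ Fin n))) := by
    intro γ hγ
    simp only [f, dif_pos hγ, hT, Finset.mem_coe, Finset.mem_product,
      Finset.mem_powersetCard, Finset.mem_univ, and_true]
    exact ⟨Finset.subset_univ _, (key γ hγ).choose_spec.1⟩
  have hinj : Set.InjOn f S := by
    intro γ₁ h₁ γ₂ h₂ hf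
    simp only [f, dif_pos h₁, dif_pos h₂, Prod.mk.injEq] at hf
    obtain ⟨hA, he⟩ := hf
    set A := (key γ₁ h₁).choose with hAdef
    have hc₁ : A.card = r := (key γ₁ h₁).choose_spec.1
    have hc₂ : A.card = r := hc₁
    have hd₁ : ulamDel σ A = ulamDel γ₁ A := (key γ₁ h₁).choose_spec.2
    have hd₂ : ulamDel σ A = ulamDel γ₂ A := by
      rw [hA]; exact (key γ₂ h₂).choose_spec.2
    have he' : ulamEnc γ₁ A hc₁ = ulamEnc γ₂ A hc₂ := by
      rw [ulamEnc_congr γ₂ hA hc₂ ((key γ₂ h₂).choose_spec.1)]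
      exact he
    have heFun : ∀ j : Fin r, γ₁.symm (A.orderEmbOfFin hc₁ j) =
        γ₂.symm (A.orderEmbOfFin hc₁ j) := by
      intro j
      have := congrArg (fun e : Fin r ↪ Fin n => e j) he'
      exact this
    have hagree : ∀ i : Fin n, γ₁ i ∈ A → γ₁ i = γ₂ i := by
      intro i hi
      have : γ₁ i ∈ Set.range (A.orderEmbOfFin hc₁) := by
        rw [Finset.range_orderEmbOfFin]; exact hi
      obtain ⟨j, hj⟩ := this
      have hi₁ : γ₁.symm (A.orderEmbOfFin hc₁ j) = i := by
        rw [hj]; exact γ₁.symm_apply_apply i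
      have hi₂ : γ₂.symm (A.orderEmbOfFin hc₁ j) = i := by rw [← heFun j]; exact hi₁
      have : γ₂ i = A.orderEmbOfFin hc₁ j := by
        rw [← hi₂]; exact γ₂.apply_symm_apply _
      rw [this, hj]
    have hmem_iff : ∀ i : Fin n, γ₁ i ∈ A ↔ γ₂ i ∈ A := by
      intro i
      constructor
      · intro hi; rw [← hagree i hi]; exact hi
      · intro hi
        have : γ₂ i ∈ Set.range (A.orderEmbOfFin hc₁) := by
          rw [Finset.range_orderEmbOfFin]; exact hi
        obtain ⟨j, hj⟩ := this
        have hi₂ : γ₂.symm (A.orderEmbOfFin hc₁ j) = i := by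
          rw [hj]; exact γ₂.symm_apply_apply i
        have hi₁ : γ₁.symm (A.orderEmbOfFin hc₁ j) = i := by rw [heFun j]; exact hi₂
        have : γ₁ i = A.orderEmbOfFin hc₁ j := by
          rw [← hi₁]; exact γ₁.apply_symm_apply _
        rw [this]
        exact Finset.orderEmbOfFin_mem A hc₁ j
    have hlists : List.ofFn (fun i => γ₁ i) = List.ofFn (fun i => γ₂ i) := by
      apply list_eq_of_mask (fun x => decide (x ∉ A))
      · rw [List.map_ofFn, List.map_ofFn]
        congr 1
        funext i
        simp only [Function.comp_apply, decide_eq_decide]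
        exact not_congr (hmem_iff i)
      · show ulamDel γ₁ A = ulamDel γ₂ A
        rw [← hd₁, hd₂]
      · intro i hi₁ hi₂ hfalse
        rw [List.get_ofFn] at hfalse ⊢
        rw [List.get_ofFn]
        have hmem : γ₁ (Fin.cast (by simp) ⟨i, hi₁⟩) ∈ A := by simpa using hfalse
        have := hagree _ hmem
        rw [this]
        congr 1
    have : (fun i : Fin n => γ₁ i) = fun i => γ₂ i := List.ofFn_injective hlists
    exact Equiv.ext (fun i => congrFun this i)
  have hfin : (T : Set (Finset (Fin n) × (Fin r ↪ Fin n))).Finite := T.finite_toSet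
  have hle := Set.ncard_le_ncard_of_injOn f hmaps hinj hfin
  rw [Set.ncard_coe_finset] at hle
  refine hle.trans ?_
  rw [hT, Finset.card_product, Finset.card_powersetCard, Finset.card_univ, Finset.card_univ,
    Fintype.card_embedding_eq]
  simp only [Fintype.card_fin]
  rw [Nat.descFactorial_eq_factorial_mul_choose]
  exact le_of_eq (by ring)
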